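/- arXiv:1506.07737 — 3 statements merged into one kernel-verified Lean document; each statement's English description precedes it below -/
import Mathlib

section
/- Let M be an A-module satisfying (I1)–(I4). Then the ℤ-linear map Λ : M_{<0} → M_skew, m ↦ m − m̄, is bijective. -/
open scoped Classical

noncomputable section

namespace CellsCacti

/-- The group algebra `A = ℤ[𝔄]` of a totally ordered abelian group `𝔄`,
written exponentially: `A = ⊕_{a ∈ 𝔄} ℤ vᵃ`. -/
abbrev GA (𝔄 : Type*) [AddCommGroup 𝔄] [LinearOrder 𝔄] [IsOrderedAddMonoid 𝔄] := AddMonoidAlgebra ℤ 𝔄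

variable {𝔄 : Type*} [AddCommGroup 𝔄] [LinearOrder 𝔄] [IsOrderedAddMonoid 𝔄]

/-- The element `vᵃ` of `A = ℤ[𝔄]`. -/
def v (a : 𝔄) : GA 𝔄 := AddMonoidAlgebra.single a 1

/-- The bar involution of `A = ℤ[𝔄]`, determined by `vᵃ ↦ v⁻ᵃ`. -/
def Abar : GA 𝔄 ≃ₐ[ℤ] GA 𝔄 := AddMonoidAlgebra.domCongr ℤ ℤ (AddEquiv.neg 𝔄)

/-- `A_{<0} = ⊕_{a < 0} ℤ vᵃ`, as a predicate on elements of `A`. -/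
def Aneg (a : GA 𝔄) : Prop := ∀ γ ∈ a.coeff.support, γ < (0 : 𝔄)

/-- The setting of Section 2 of "Cells and cacti": an `A`-module `M` with an `A`-basis
`(m_x)_{x ∈ X}` indexed by a poset `X` (hypothesis (I1)), endowed with a `bar`-semilinear
involution (hypothesis (I2)) satisfying the triangularity condition (I3), such that lower
intervals of `X` are finite (hypothesis (I4)). -/
structure BarModule (𝔄 : Type*) [AddCommGroup 𝔄] [LinearOrder 𝔄] [IsOrderedAddMonoid 𝔄] (X : Type*) [PartialOrder X]
    (Mod : Type*) [AddCommGroup Mod] [Module (GA 𝔄) Mod] where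
  /-- (I1): the `A`-basis `(m_x)_{x ∈ X}` of `M`. -/
  m : Module.Basis X (GA 𝔄) Mod
  /-- (I2): a semilinear involution of `M` (additivity). -/
  bar : Mod →+ Mod
  /-- (I2): semilinearity of the involution with respect to the bar involution of `A`. -/
  bar_smul : ∀ (a : GA 𝔄) (x : Mod), bar (a • x) = Abar a • bar x
  /-- (I2): `bar` is an involution. -/
  bar_invol : ∀ x : Mod, bar (bar x) = x
  /-- (I3): `bar m_x ≡ m_x` modulo `⊕_{y < x} A m_y`. -/
  I3 : ∀ x : X, bar (m x) - m x ∈ Submodule.span (GA 𝔄) (m '' {y | y < x})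
  /-- (I4): the set `{y | y ≤ x}` is finite. -/
  I4 : ∀ x : X, {y | y ≤ x}.Finite

variable {X : Type*} [PartialOrder X] {Mod : Type*} [AddCommGroup Mod] [Module (GA 𝔄) Mod]

/-- `M_{<0} = ⊕_{x ∈ X} A_{<0} m_x`. -/
def BarModule.Mneg (S : BarModule 𝔄 X Mod) : Set Mod :=
  {u | ∀ x : X, Aneg (S.m.repr u x)}

/-- `M_skew = {m ∈ M | m + bar m = 0}`. -/
def BarModule.Mskew (S : BarModule 𝔄 X Mod) : Set Mod :=
  {u | u + S.bar u = 0}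

/-! ### Auxiliary lemmas -/

lemma Abar_apply (a : GA 𝔄) (γ : 𝔄) : (Abar a).coeff γ = a.coeff (-γ) := by
  show (AddMonoidAlgebra.domCongr ℤ ℤ (AddEquiv.neg 𝔄) a).coeff γ = a.coeff (-γ)
  rw [AddMonoidAlgebra.coeff_domCongr]
  rfl

lemma Aneg_zero : Aneg (0 : GA 𝔄) := by
  intro γ hγ; simp at hγ

lemma Aneg_add {a b : GA 𝔄} (ha : Aneg a) (hb : Aneg b) : Aneg (a + b) := by
  intro γ hγ
  rcases Finset.mem_union.mp (Finsupp.support_add hγ) with h | h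
  · exact ha γ h
  · exact hb γ h

lemma Aneg_sub {a b : GA 𝔄} (ha : Aneg a) (hb : Aneg b) : Aneg (a - b) := by
  intro γ hγ
  have : a.coeff γ - b.coeff γ ≠ 0 := by simpa using Finsupp.mem_support_iff.mp hγ
  by_cases h : a.coeff γ = 0
  · exact hb γ (Finsupp.mem_support_iff.mpr (by intro h'; apply this; simp [h, h']))
  · exact ha γ (Finsupp.mem_support_iff.mpr h)

variable (S : BarModule 𝔄 X Mod)

lemma repr_span_eq_zero {T : Set X} {e : Mod} (he : e ∈ Submodule.span (GA 𝔄) (S.m '' T))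
    {y : X} (hy : y ∉ T) : S.m.repr e y = 0 := by
  induction he using Submodule.span_induction with
  | mem z hz =>
    obtain ⟨t, ht, rfl⟩ := hz
    have : t ≠ y := fun h => hy (h ▸ ht)
    simp [Module.Basis.repr_self, Finsupp.single_apply, this]
  | zero => simp
  | add u v _ _ hu hv => rw [map_add]; simp [hu, hv]
  | smul a u _ hu => rw [map_smul]; simp [hu]

lemma repr_bar_basis (x y : X) (h : ¬ y < x) :
    S.m.repr (S.bar (S.m x)) y = S.m.repr (S.m x) y := by
  have h0 : S.m.repr (S.bar (S.m x) - S.m x) y = 0 :=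
    repr_span_eq_zero S (S.I3 x) (by simpa using h)
  rw [map_sub, Finsupp.sub_apply, sub_eq_zero] at h0
  exact h0

lemma repr_bar_max (w : Mod) (x : X)
    (hx : ∀ y ∈ (S.m.repr w).support, ¬ x < y) :
    S.m.repr (S.bar w) x = Abar (S.m.repr w x) := by
  set c := S.m.repr w with hc
  have hw : w = ∑ y ∈ c.support, c y • S.m y := by
    conv_lhs => rw [← S.m.linearCombination_repr w]
    rw [Finsupp.linearCombination_apply, Finsupp.sum]
  have hbar : S.bar w = ∑ y ∈ c.support, Abar (c y) • S.bar (S.m y) := by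
    rw [hw, map_sum]
    exact Finset.sum_congr rfl fun y _ => S.bar_smul _ _
  rw [hbar, map_sum]
  rw [Finset.sum_apply']
  have hterm : ∀ y ∈ c.support,
      S.m.repr (Abar (c y) • S.bar (S.m y)) x = if y = x then Abar (c x) else 0 := by
    intro y hy
    rw [map_smul, Finsupp.smul_apply, repr_bar_basis S y x (hx y hy)]
    simp only [Module.Basis.repr_self, Finsupp.single_apply, smul_eq_mul]
    by_cases h : y = x
    · subst h; simp
    · simp [h]
  rw [Finset.sum_congr rfl hterm, Finset.sum_ite_eq' c.support x (fun _ => Abar (c x))]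
  by_cases h : x ∈ c.support
  · simp [h]
  · have : c x = 0 := Finsupp.notMem_support_iff.mp h
    simp [h, this]

lemma lambda_mem_skew (u : Mod) : u - S.bar u ∈ S.Mskew := by
  show (u - S.bar u) + S.bar (u - S.bar u) = 0
  rw [map_sub, S.bar_invol]
  abel

lemma skew_sub {w z : Mod} (hw : w ∈ S.Mskew) (hz : z ∈ S.Mskew) : w - z ∈ S.Mskew := by
  show (w - z) + S.bar (w - z) = 0
  rw [map_sub]
  have h1 := hw; have h2 := hz
  simp only [BarModule.Mskew, Set.mem_setOf_eq] at h1 h2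
  have : (w - z) + (S.bar w - S.bar z) = (w + S.bar w) - (z + S.bar z) := by abel
  rw [this, h1, h2, sub_zero]

lemma fixed_neg_zero {w : Mod} (hbar : S.bar w = w) (hneg : w ∈ S.Mneg) : w = 0 := by
  by_contra h
  have hrepr : S.m.repr w ≠ 0 := fun h0 => h (by
    have := congrArg S.m.repr.symm h0
    simpa using this)
  have hsupp : (S.m.repr w).support.Nonempty := by
    rw [Finsupp.support_nonempty_iff]; exact hrepr
  obtain ⟨x, hx, hmax⟩ := Finset.exists_maximal hsupp
  have hmax : ∀ y ∈ (S.m.repr w).support, ¬ x < y := fun y hy hlt => hlt.not_ge (hmax hy hlt.le)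
  have h1 : S.m.repr w x = Abar (S.m.repr w x) := by
    conv_lhs => rw [← hbar]
    exact repr_bar_max S w x hmax
  have hcx : S.m.repr w x ≠ 0 := Finsupp.mem_support_iff.mp hx
  obtain ⟨γ, hγ⟩ := Finsupp.support_nonempty_iff.mpr (show (S.m.repr w x).coeff ≠ 0 by simpa using hcx)
  have hγ0 : γ < 0 := hneg x γ hγ
  have hval : (S.m.repr w x).coeff (-γ) ≠ 0 := by
    rw [h1, Abar_apply, neg_neg]
    exact Finsupp.mem_support_iff.mp hγ
  have : (-γ) < 0 := hneg x (-γ) (Finsupp.mem_support_iff.mpr hval)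
  exact absurd this (not_lt.mpr (le_of_lt (neg_pos.mpr hγ0)))

lemma surj_aux : ∀ (n : ℕ) (D : Finset X), D.card ≤ n →
    (∀ x ∈ D, ∀ y : X, y ≤ x → y ∈ D) →
    ∀ w ∈ S.Mskew, ↑(S.m.repr w).support ⊆ (D : Set X) →
    ∃ u ∈ S.Mneg, u - S.bar u = w := by
  intro n
  induction n with
  | zero =>
    intro D hcard _ w _ hsub
    have hD : D = ∅ := Finset.card_eq_zero.mp (Nat.le_zero.mp hcard)
    subst hD
    have : S.m.repr w = 0 := by
      rw [← Finsupp.support_eq_empty]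
      refine Finset.eq_empty_iff_forall_notMem.mpr fun y hy => ?_
      simpa using hsub hy
    have hw0 : w = 0 := by
      have := congrArg S.m.repr.symm this
      simpa using this
    exact ⟨0, fun x => by simp [Aneg_zero], by simp [hw0]⟩
  | succ n ih =>
    intro D hcard hdc w hw hsub
    rcases D.eq_empty_or_nonempty with hD | hD
    · subst hD
      have : S.m.repr w = 0 := by
        rw [← Finsupp.support_eq_empty]
        refine Finset.eq_empty_iff_forall_notMem.mpr fun y hy => ?_
        simpa using hsub hy
      have hw0 : w = 0 := by
        have := congrArg S.m.repr.symm this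
        simpa using this
      exact ⟨0, fun x => by simp [Aneg_zero], by simp [hw0]⟩
    obtain ⟨x, hxD, hmax⟩ := D.exists_maximal hD
    have hmax : ∀ y ∈ D, ¬ x < y := fun y hy hlt => hlt.not_ge (hmax hy hlt.le)
    have herase_card : (D.erase x).card ≤ n := by
      rw [Finset.card_erase_of_mem hxD]
      omega
    have herase_dc : ∀ z ∈ D.erase x, ∀ y : X, y ≤ z → y ∈ D.erase x := by
      intro z hz y hyz
      have hzD : z ∈ D := Finset.mem_of_mem_erase hz
      have hzx : z ≠ x := Finset.ne_of_mem_erase hz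
      have hyD : y ∈ D := hdc z hzD y hyz
      refine Finset.mem_erase.mpr ⟨?_, hyD⟩
      rintro rfl
      exact hmax z hzD (lt_of_le_of_ne hyz (Ne.symm hzx))
    set c := S.m.repr w with hc
    by_cases hxs : x ∈ c.support
    · -- main case
      have hnotlt : ∀ y ∈ c.support, ¬ x < y := fun y hy hlt =>
        hmax y (hsub hy) hlt
      have hskew : c x + Abar (c x) = 0 := by
        have h0 : S.m.repr (w + S.bar w) x = 0 := by rw [hw]; simp
        rw [map_add, Finsupp.add_apply, repr_bar_max S w x hnotlt] at h0
        exact h0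
      have hsk : ∀ δ : 𝔄, (c x).coeff δ + (c x).coeff (-δ) = 0 := by
        intro δ
        have := congrArg (fun f : GA 𝔄 => f.coeff δ) hskew
        simpa [AddMonoidAlgebra.coeff_add, Abar_apply] using this
      set p : GA 𝔄 := AddMonoidAlgebra.ofCoeff (Finsupp.filter (fun γ => γ < (0:𝔄)) (c x).coeff) with hp
      have hp_apply : ∀ γ, p.coeff γ = if γ < (0:𝔄) then (c x).coeff γ else 0 := by
        intro γ; rw [hp]; exact Finsupp.filter_apply _ _ γ
      have hpA : Aneg p := by
        intro γ hγ
        have := Finsupp.mem_support_iff.mp hγ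
        rw [hp_apply] at this
        by_contra h
        exact this (if_neg h)
      have key : p - Abar p = c x := by
        ext γ
        rw [AddMonoidAlgebra.coeff_sub, Finsupp.sub_apply, Abar_apply, hp_apply, hp_apply]
        rcases lt_trichotomy γ (0:𝔄) with h | h | h
        · have h2 : ¬ (-γ < 0) := not_lt.mpr (le_of_lt (neg_pos.mpr h))
          simp [h, h2]
        · subst h
          have := hsk 0
          rw [neg_zero] at this
          have h0 : (c x).coeff 0 = 0 := by omega
          simp [h0]
        · have h1 : ¬ (γ < 0) := not_lt.mpr (le_of_lt h)
          have h2 : -γ < 0 := neg_lt_zero.mpr h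
          have := hsk γ
          rw [if_neg h1, if_pos h2]
          omega
      set w' := w - (p • S.m x - S.bar (p • S.m x)) with hw'
      have hw'skew : w' ∈ S.Mskew := skew_sub S hw (lambda_mem_skew S _)
      have hrepr' : ∀ y : X, ¬ y < x →
          S.m.repr w' y = c y - (if y = x then c x else 0) := by
        intro y hy
        have e1 : S.m.repr (p • S.m x) y = if y = x then p else 0 := by
          rw [map_smul]
          simp only [Module.Basis.repr_self, Finsupp.smul_apply, Finsupp.single_apply, smul_eq_mul]
          by_cases h : y = x
          · subst h; simp
          · simp [h, Ne.symm h]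
        have e2 : S.m.repr (S.bar (p • S.m x)) y = if y = x then Abar p else 0 := by
          rw [S.bar_smul, map_smul, Finsupp.smul_apply, repr_bar_basis S x y hy]
          simp only [Module.Basis.repr_self, Finsupp.single_apply, smul_eq_mul]
          by_cases h : y = x
          · subst h; simp
          · simp [h, Ne.symm h]
        rw [hw', map_sub, map_sub, Finsupp.sub_apply, Finsupp.sub_apply, e1, e2]
        by_cases h : y = x
        · subst h; rw [if_pos rfl, if_pos rfl, if_pos rfl, ← key]
        · simp [h, hc]
      have hsupp' : ↑(S.m.repr w').support ⊆ ((D.erase x : Finset X) : Set X) := by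
        intro y hy
        simp only [Finset.coe_erase, Set.mem_diff, Finset.mem_coe, Set.mem_singleton_iff]
        have hy' : S.m.repr w' y ≠ 0 := Finsupp.mem_support_iff.mp hy
        constructor
        · by_contra hyD
          have hylt : ¬ y < x := by
            intro hlt
            exact hyD (hdc x hxD y (le_of_lt hlt))
          have hyx : y ≠ x := fun h => hyD (h ▸ hxD)
          rw [hrepr' y hylt, if_neg hyx, sub_zero] at hy'
          have : y ∈ c.support := Finsupp.mem_support_iff.mpr hy'
          exact hyD (hsub this)
        · rintro rfl
          rw [hrepr' y (lt_irrefl y), if_pos rfl, sub_self] at hy'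
          exact hy' rfl
      obtain ⟨u', hu'neg, hu'⟩ := ih (D.erase x) herase_card herase_dc w' hw'skew hsupp'
      refine ⟨u' + p • S.m x, ?_, ?_⟩
      · intro z
        have e1 : S.m.repr (p • S.m x) z = if z = x then p else 0 := by
          rw [map_smul]
          simp only [Module.Basis.repr_self, Finsupp.smul_apply, Finsupp.single_apply, smul_eq_mul]
          by_cases h : z = x
          · subst h; simp
          · simp [h, Ne.symm h]
        rw [map_add, Finsupp.add_apply, e1]
        by_cases h : z = x
        · rw [if_pos h]; exact Aneg_add (hu'neg z) hpA
        · rw [if_neg h, add_zero]; exact hu'neg z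
      · rw [map_add]
        have : u' + p • S.m x - (S.bar u' + S.bar (p • S.m x))
            = (u' - S.bar u') + (p • S.m x - S.bar (p • S.m x)) := by abel
        rw [this, hu', hw']
        abel
    · -- x not in support: shrink D
      have hsub' : ↑(S.m.repr w).support ⊆ ((D.erase x : Finset X) : Set X) := by
        intro y hy
        simp only [Finset.coe_erase, Set.mem_diff, Finset.mem_coe, Set.mem_singleton_iff]
        exact ⟨hsub hy, fun h => hxs (h ▸ hy)⟩
      exact ih (D.erase x) herase_card herase_dc w hw hsub'

/-- **Proposition 2.1** (cells and cacti): the ℤ-linear map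
`Λ : M_{<0} → M_skew`, `m ↦ m - bar m`, is bijective. -/
theorem prop_inf_anti (S : BarModule 𝔄 X Mod) :
    Set.BijOn (fun u => u - S.bar u) S.Mneg S.Mskew := by
  refine ⟨fun u _ => lambda_mem_skew S u, ?_, ?_⟩
  · intro u hu u' hu' heq
    simp only at heq
    have hbar : S.bar (u - u') = u - u' := by
      rw [map_sub]
      have : u - S.bar u = u' - S.bar u' := heq
      have h2 : u - u' = S.bar u - S.bar u' := by
        have := sub_eq_sub_iff_sub_eq_sub.mp this
        linear_combination (norm := abel) this
      exact h2.symm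
    have hneg : u - u' ∈ S.Mneg := by
      intro x
      rw [map_sub, Finsupp.sub_apply]
      exact Aneg_sub (hu x) (hu' x)
    have := fixed_neg_zero S hbar hneg
    exact sub_eq_zero.mp this
  · intro w hw
    set D : Finset X := (S.m.repr w).support.biUnion
      (fun x => (S.I4 x).toFinset) with hD
    have hdc : ∀ x ∈ D, ∀ y : X, y ≤ x → y ∈ D := by
      intro x hx y hyx
      rw [hD, Finset.mem_biUnion] at hx ⊢
      obtain ⟨z, hz, hxz⟩ := hx
      refine ⟨z, hz, ?_⟩
      rw [Set.Finite.mem_toFinset] at hxz ⊢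
      exact le_trans hyx hxz
    have hsub : ↑(S.m.repr w).support ⊆ (D : Set X) := by
      intro y hy
      rw [Finset.mem_coe, hD, Finset.mem_biUnion]
      exact ⟨y, hy, by rw [Set.Finite.mem_toFinset]; exact le_refl y⟩
    obtain ⟨u, huneg, hu⟩ := surj_aux S D.card D le_rfl hdc w hw hsub
    exact ⟨u, huneg, hu⟩

end CellsCacti
end
end

section
/- Let M be an A-module satisfying (I1)–(I4) and let m ∈ M. Then there exists a unique M' ∈ M such that M̄' = M' and M' ≡ m mod M_{<0}. -/
open scoped Classical

noncomputable section

namespace CellsCacti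

variable {𝔄 : Type*} [AddCommGroup 𝔄] [LinearOrder 𝔄] [IsOrderedAddMonoid 𝔄]

variable {X : Type*} [PartialOrder X] {Mod : Type*} [AddCommGroup Mod] [Module (GA 𝔄) Mod]

lemma GA_sub_apply (a b : GA 𝔄) (γ : 𝔄) : (a - b).coeff γ = a.coeff γ - b.coeff γ := Finsupp.sub_apply a.coeff b.coeff γ
lemma GA_add_apply (a b : GA 𝔄) (γ : 𝔄) : (a + b).coeff γ = a.coeff γ + b.coeff γ := Finsupp.add_apply a.coeff b.coeff γ

lemma Aneg_eq_zero_of_bar_fixed {a : GA 𝔄} (ha : Aneg a) (h : Abar a = a) : a = 0 := by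
  ext γ
  by_contra hne
  have hγ : γ ∈ a.coeff.support := Finsupp.mem_support_iff.2 (by simpa using hne)
  have h1 : γ < 0 := ha γ hγ
  have h2 : a.coeff (-γ) = a.coeff γ := by rw [← Abar_apply, h]
  have hγ' : (-γ) ∈ a.coeff.support := Finsupp.mem_support_iff.2 (by simpa [h2] using hne)
  exact lt_asymm (ha _ hγ') (neg_pos.2 h1)

lemma exists_Aneg_of_skew {a : GA 𝔄} (h : a + Abar a = 0) :
    ∃ b : GA 𝔄, Aneg b ∧ b - Abar b = a := by
  have key : ∀ γ : 𝔄, a.coeff γ + a.coeff (-γ) = 0 := by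
    intro γ
    have h' : (a + Abar a).coeff γ = (0 : GA 𝔄).coeff γ := by rw [h]
    rw [GA_add_apply, Abar_apply] at h'
    simpa using h'
  have key0 : a.coeff (0:𝔄) = 0 := by
    have h0 := key 0
    rw [neg_zero] at h0; omega
  refine ⟨AddMonoidAlgebra.ofCoeff (a.coeff.filter (· < (0:𝔄))), ?_, ?_⟩
  · intro γ hγ
    have hne := Finsupp.mem_support_iff.1 hγ
    rw [AddMonoidAlgebra.coeff_ofCoeff, Finsupp.filter_apply] at hne
    by_contra hc
    simp [hc] at hne
  · ext γ
    rw [GA_sub_apply, Abar_apply, AddMonoidAlgebra.coeff_ofCoeff, Finsupp.filter_apply, Finsupp.filter_apply]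
    rcases lt_trichotomy γ 0 with hγ | hγ | hγ
    · rw [if_pos hγ, if_neg (not_lt.2 (neg_pos.2 hγ).le)]
      simp
    · subst hγ
      rw [neg_zero, if_neg (lt_irrefl _), key0]
      simp
    · have hk := key γ
      rw [if_neg (not_lt.2 hγ.le), if_pos (neg_lt_zero.2 hγ)]
      omega

lemma repr_bar_basis_s1 (S : BarModule 𝔄 X Mod) {z x : X} (h : ¬ x < z) :
    S.m.repr (S.bar (S.m z)) x = if z = x then 1 else 0 := by
  have hsupp := Module.Basis.repr_support_subset_of_mem_span S.m _ (S.I3 z)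
  have h0 : S.m.repr (S.bar (S.m z) - S.m z) x = 0 := by
    by_contra hne
    exact h (hsupp (Finsupp.mem_support_iff.2 hne))
  rw [map_sub, Finsupp.sub_apply, S.m.repr_self, Finsupp.single_apply] at h0
  exact sub_eq_zero.1 h0

lemma repr_bar_eq_of_max (S : BarModule 𝔄 X Mod) (d : Mod) (x : X)
    (hx : ∀ z ∈ (S.m.repr d).support, ¬ x < z) :
    S.m.repr (S.bar d) x = Abar (S.m.repr d x) := by
  classical
  have hd : d = ∑ z ∈ (S.m.repr d).support, S.m.repr d z • S.m z := by
    conv_lhs => rw [← S.m.linearCombination_repr d]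
    rw [Finsupp.linearCombination_apply, Finsupp.sum]
  have hb : S.bar d = ∑ z ∈ (S.m.repr d).support, Abar (S.m.repr d z) • S.bar (S.m z) := by
    conv_lhs => rw [hd]
    rw [map_sum]
    exact Finset.sum_congr rfl fun z _ => S.bar_smul _ _
  rw [hb, map_sum, Finsupp.finset_sum_apply]
  have hterm : ∀ z ∈ (S.m.repr d).support,
      (S.m.repr (Abar (S.m.repr d z) • S.bar (S.m z))) x
        = if z = x then Abar (S.m.repr d x) else 0 := by
    intro z hz
    rw [map_smul, Finsupp.smul_apply, repr_bar_basis_s1 S (hx z hz)]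
    by_cases hzx : z = x
    · subst hzx; simp
    · simp [hzx]
  rw [Finset.sum_congr rfl hterm, Finset.sum_ite_eq' (S.m.repr d).support x
    (fun _ => Abar (S.m.repr d x))]
  by_cases hxs : x ∈ (S.m.repr d).support
  · rw [if_pos hxs]
  · rw [if_neg hxs, Finsupp.notMem_support_iff.1 hxs, map_zero]

lemma Mneg_bar_fixed_eq_zero (S : BarModule 𝔄 X Mod) {d : Mod}
    (hneg : d ∈ S.Mneg) (hbar : S.bar d = d) : d = 0 := by
  by_contra hne
  have hr : S.m.repr d ≠ 0 := fun h0 => hne (by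
    have := congrArg S.m.repr.symm h0
    simpa using this)
  obtain ⟨x0, hx0⟩ := Finsupp.support_nonempty_iff.2 hr
  obtain ⟨x, hxmem, hmax⟩ := Set.Finite.exists_maximalFor id
    (↑(S.m.repr d).support) (Finset.finite_toSet _) ⟨x0, hx0⟩
  have hx : ∀ z ∈ (S.m.repr d).support, ¬ x < z := by
    intro z hz hlt
    exact hlt.ne (le_antisymm hlt.le (hmax hz hlt.le))
  have hkey := repr_bar_eq_of_max S d x hx
  rw [hbar] at hkey
  have : S.m.repr d x = 0 :=
    Aneg_eq_zero_of_bar_fixed (hneg x) hkey.symm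
  exact Finsupp.mem_support_iff.1 hxmem this

lemma repr_bar_basis_support (S : BarModule 𝔄 X Mod) (x : X) :
    ↑(S.m.repr (S.bar (S.m x))).support ⊆ {y | y ≤ x} := by
  intro y hy
  by_cases hxy : y = x
  · simp [hxy]
  · have heq : S.m.repr (S.bar (S.m x)) y = S.m.repr (S.bar (S.m x) - S.m x) y := by
      rw [map_sub, Finsupp.sub_apply, S.m.repr_self, Finsupp.single_apply,
        if_neg (fun h => hxy h.symm), sub_zero]
    have hne := Finsupp.mem_support_iff.1 hy
    rw [heq] at hne
    exact le_of_lt (Module.Basis.repr_support_subset_of_mem_span S.m _ (S.I3 x)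
      (Finsupp.mem_support_iff.2 hne))

lemma exists_Mneg_skew_aux (S : BarModule 𝔄 X Mod) (Y : Finset X) :
    (∀ x ∈ Y, ∀ y : X, y ≤ x → y ∈ Y) →
    ∀ d : Mod, ↑(S.m.repr d).support ⊆ (Y : Set X) → d + S.bar d = 0 →
    ∃ n : Mod, n ∈ S.Mneg ∧ n - S.bar n = d := by
  classical
  induction Y using Finset.strongInduction with
  | _ Y ih =>
  intro hY d hd hskew
  rcases Finset.eq_empty_or_nonempty Y with rfl | hYne
  · have hr0 : S.m.repr d = 0 := by
      refine Finsupp.support_eq_empty.1 (Finset.eq_empty_iff_forall_notMem.2 fun y hy => ?_)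
      simpa using hd hy
    have hd0 : d = 0 := by
      have := congrArg S.m.repr.symm hr0
      simpa using this
    refine ⟨0, fun y => ?_, by rw [map_zero, hd0, sub_zero]⟩
    simpa using (Aneg_zero (𝔄 := 𝔄))
  · obtain ⟨x, hxY, hmax⟩ := Set.Finite.exists_maximalFor id (↑Y : Set X)
      Y.finite_toSet (Finset.coe_nonempty.2 hYne)
    have hxmax : ∀ z ∈ (S.m.repr d).support, ¬ x < z := fun z hz hlt =>
      hlt.ne (le_antisymm hlt.le (hmax (hd hz) hlt.le))
    have hcskew : S.m.repr d x + Abar (S.m.repr d x) = 0 := by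
      have h0 : S.m.repr (d + S.bar d) x = 0 := by rw [hskew]; simp
      rw [map_add, Finsupp.add_apply, repr_bar_eq_of_max S d x hxmax] at h0
      exact h0
    obtain ⟨b, hbneg, hbc⟩ := exists_Aneg_of_skew hcskew
    set w : Mod := b • S.m x - S.bar (b • S.m x) with hw
    set d' : Mod := d - w with hd'
    have hwskew : w + S.bar w = 0 := by
      rw [hw, map_sub, S.bar_invol]
      abel
    have hd'skew : d' + S.bar d' = 0 := by
      have h1 : d' + S.bar d' = (d + S.bar d) - (w + S.bar w) := by
        rw [hd', map_sub]; abel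
      rw [h1, hskew, hwskew, sub_zero]
    have hwrepr : ∀ y, S.m.repr w y
        = (if x = y then b else 0) - Abar b * S.m.repr (S.bar (S.m x)) y := by
      intro y
      rw [hw, S.bar_smul, map_sub, Finsupp.sub_apply, map_smul, map_smul,
        Finsupp.smul_apply, Finsupp.smul_apply, S.m.repr_self, Finsupp.single_apply]
      simp [smul_eq_mul, mul_ite]
    have hdy : ∀ y, S.m.repr d' y = S.m.repr d y
        - ((if x = y then b else 0) - Abar b * S.m.repr (S.bar (S.m x)) y) := by
      intro y
      rw [hd', map_sub, Finsupp.sub_apply, hwrepr]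
    have hsupp' : ↑(S.m.repr d').support ⊆ (↑(Y.erase x) : Set X) := by
      intro y hy
      have hyne := Finsupp.mem_support_iff.1 hy
      by_cases hyx : y = x
      · exfalso
        apply hyne
        subst hyx
        rw [hdy, if_pos rfl, repr_bar_basis_s1 S (lt_irrefl y), if_pos rfl, mul_one, hbc]
        ring
      · refine Finset.mem_coe.2 (Finset.mem_erase.2 ⟨hyx, ?_⟩)
        by_contra hyY
        apply hyne
        have h1 : S.m.repr d y = 0 :=
          Finsupp.notMem_support_iff.1 (fun hmem => hyY (hd hmem))
        have h2 : S.m.repr (S.bar (S.m x)) y = 0 := by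
          by_contra h2
          exact hyY (hY x hxY y (repr_bar_basis_support S x (Finsupp.mem_support_iff.2 h2)))
        rw [hdy, h1, h2, if_neg (fun h => hyx h.symm)]
        ring
    have hY' : ∀ a ∈ Y.erase x, ∀ y : X, y ≤ a → y ∈ Y.erase x := by
      intro a ha y hya
      obtain ⟨hax, haY⟩ := Finset.mem_erase.1 ha
      refine Finset.mem_erase.2 ⟨?_, hY a haY y hya⟩
      rintro rfl
      exact hax (le_antisymm hya (hmax (Finset.mem_coe.2 haY) hya)).symm
    obtain ⟨n', hn'neg, hn'⟩ := ih (Y.erase x) (Finset.erase_ssubset hxY) hY' d' hsupp' hd'skew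
    refine ⟨b • S.m x + n', fun y => ?_, ?_⟩
    · have hrn : S.m.repr (b • S.m x + n') y = (if x = y then b else 0) + S.m.repr n' y := by
        rw [map_add, Finsupp.add_apply, map_smul, Finsupp.smul_apply, S.m.repr_self,
          Finsupp.single_apply]
        simp [smul_eq_mul, mul_ite]
      rw [hrn]
      refine Aneg_add ?_ (hn'neg y)
      by_cases h : x = y
      · simpa [h] using hbneg
      · simpa [h] using (Aneg_zero (𝔄 := 𝔄))
    · have h2 : n' - S.bar n' = d - (b • S.m x - S.bar (b • S.m x)) := by rw [hn', hd', hw]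
      calc b • S.m x + n' - S.bar (b • S.m x + n')
          = (b • S.m x - S.bar (b • S.m x)) + (n' - S.bar n') := by rw [map_add]; abel
        _ = (b • S.m x - S.bar (b • S.m x))
            + (d - (b • S.m x - S.bar (b • S.m x))) := by rw [h2]
        _ = d := by abel

/-- **Corollary 2.3** (cells and cacti): for every `m ∈ M` there exists a unique `M' ∈ M`
such that `bar M' = M'` and `M' ≡ m mod M_{<0}`. -/
theorem coro_anti_stable (S : BarModule 𝔄 X Mod) (m : Mod) :
    ∃! M' : Mod, S.bar M' = M' ∧ M' - m ∈ S.Mneg := by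
  classical
  set d : Mod := S.bar m - m with hdd
  have hdskew : d + S.bar d = 0 := by
    rw [hdd, map_sub, S.bar_invol]
    abel
  have hfin : (⋃ z ∈ (S.m.repr d).support, {y : X | y ≤ z}).Finite :=
    Set.Finite.biUnion (Finset.finite_toSet _) (fun z _ => S.I4 z)
  have hdown : ∀ x ∈ hfin.toFinset, ∀ y : X, y ≤ x → y ∈ hfin.toFinset := by
    intro x hx y hyx
    rw [Set.Finite.mem_toFinset] at hx ⊢
    simp only [Set.mem_iUnion, Set.mem_setOf_eq] at hx ⊢
    obtain ⟨z, hz, hxz⟩ := hx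
    exact ⟨z, hz, hyx.trans hxz⟩
  have hsupp : ↑(S.m.repr d).support ⊆ (↑hfin.toFinset : Set X) := by
    intro z hz
    rw [Finset.mem_coe, Set.Finite.mem_toFinset]
    exact Set.mem_biUnion hz (le_refl z)
  obtain ⟨n, hnneg, hn⟩ := exists_Mneg_skew_aux S hfin.toFinset hdown d hsupp hdskew
  have hbar : S.bar (m + n) = m + n := by
    rw [map_add]
    calc S.bar m + S.bar n = (S.bar m - m) - (n - S.bar n) + m + n := by abel
      _ = m + n := by rw [hn, ← hdd]; abel
  refine ⟨m + n, ⟨hbar, by simpa using hnneg⟩, ?_⟩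
  rintro M' ⟨hb', hm'⟩
  have hneg : M' - (m + n) ∈ S.Mneg := by
    intro y
    have hdiff : M' - (m + n) = (M' - m) - n := by abel
    rw [hdiff, map_sub, Finsupp.sub_apply]
    exact Aneg_sub (hm' y) (hnneg y)
  have hbarfix : S.bar (M' - (m + n)) = M' - (m + n) := by
    rw [map_sub, hb', hbar]
  exact sub_eq_zero.1 (Mneg_bar_fixed_eq_zero S hneg hbarfix)

end CellsCacti
end
end

section
/- Let M be an A-module satisfying (I1)–(I4), let 𝒳 ⊆ X be a lower set (if x ≤ y and y ∈ 𝒳 then x ∈ 𝒳), and set M^𝒳 = ⊕_{x∈𝒳} A m_x. If M' ∈ M satisfies M̄' = M' and M' ∈ M^𝒳 + M_{<0}, then M' ∈ M^𝒳. -/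
open scoped Classical

noncomputable section

namespace CellsCacti

variable {𝔄 : Type*} [AddCommGroup 𝔄] [LinearOrder 𝔄] [IsOrderedAddMonoid 𝔄]

variable {X : Type*} [PartialOrder X] {Mod : Type*} [AddCommGroup Mod] [Module (GA 𝔄) Mod]

/-- **Corollary 2.4** (cells and cacti): let `𝒳 ⊆ X` be a lower set and
`M^𝒳 = ⊕_{x ∈ 𝒳} A m_x`.  If `M' ∈ M` satisfies `bar M' = M'` and `M' ∈ M^𝒳 + M_{<0}`,
then `M' ∈ M^𝒳`. -/
theorem coro_kl_base_triangulaire (S : BarModule 𝔄 X Mod) (𝒳 : Set X)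
    (h𝒳 : ∀ x y : X, x ≤ y → y ∈ 𝒳 → x ∈ 𝒳) (M' : Mod)
    (hbar : S.bar M' = M')
    (hmem : ∃ u ∈ Submodule.span (GA 𝔄) (S.m '' 𝒳), ∃ w ∈ S.Mneg, M' = u + w) :
    M' ∈ Submodule.span (GA 𝔄) (S.m '' 𝒳) := by
  obtain ⟨u, hu, w, hw, hM⟩ := hmem
  rw [Module.Basis.mem_span_image]
  by_contra hns
  set c := S.m.repr M' with hc
  -- the set of "bad" indices
  have hY : (c.support.filter (fun x => x ∉ 𝒳)).Nonempty := by
    rw [Finset.filter_nonempty_iff]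
    rw [Set.not_subset] at hns
    obtain ⟨x, hx1, hx2⟩ := hns
    exact ⟨x, hx1, hx2⟩
  obtain ⟨x, hxY, hxmax⟩ : ∃ x ∈ c.support.filter (fun x => x ∉ 𝒳),
      ∀ y ∈ c.support.filter (fun x => x ∉ 𝒳), ¬ x < y := by
    obtain ⟨x, hx⟩ := Finset.exists_maximal hY
    exact ⟨x, hx.1, fun y hy hxy => lt_irrefl x (hxy.trans_le (hx.2 hy hxy.le))⟩
  rw [Finset.mem_filter] at hxY
  obtain ⟨hxsupp, hx𝒳⟩ := hxY
  -- the coefficient of x is in A_{<0}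
  have hux : S.m.repr u x = 0 := by
    have := (Module.Basis.mem_span_image _).mp hu
    by_contra h
    exact hx𝒳 (this (Finsupp.mem_support_iff.mpr h))
  have hcx : c x = S.m.repr w x := by
    rw [hc, hM, map_add, Finsupp.add_apply, hux, zero_add]
  have hneg : Aneg (c x) := hcx ▸ hw x
  -- expansion of M' in the basis
  have hMsum : M' = ∑ y ∈ c.support, c y • S.m y := by
    conv_lhs => rw [← S.m.linearCombination_repr M']
    rw [Finsupp.linearCombination_apply, Finsupp.sum]
  -- the coefficient of x in bar M' is Abar (c x)
  have hdz : ∀ y ∈ c.support, S.m.repr (S.bar (S.m y) - S.m y) x = 0 := by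
    intro y hy
    by_contra h
    have hsupp := (Module.Basis.mem_span_image _).mp (S.I3 y)
    have hxy : x < y := hsupp (Finsupp.mem_support_iff.mpr h)
    by_cases hy𝒳 : y ∈ 𝒳
    · exact hx𝒳 (h𝒳 x y hxy.le hy𝒳)
    · exact hxmax y (Finset.mem_filter.mpr ⟨hy, hy𝒳⟩) hxy
  have hkey : S.m.repr (S.bar M') x = Abar (c x) := by
    conv_lhs => rw [hMsum]
    rw [map_sum, map_sum, Finsupp.finset_sum_apply]
    rw [Finset.sum_eq_single x]
    · rw [S.bar_smul, map_smul, Finsupp.smul_apply, smul_eq_mul]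
      have : S.bar (S.m x) = (S.bar (S.m x) - S.m x) + S.m x := by abel
      rw [this, map_add, Finsupp.add_apply, hdz x hxsupp, zero_add,
        S.m.repr_self, Finsupp.single_eq_same, mul_one]
    · intro y hy hyx
      rw [S.bar_smul, map_smul, Finsupp.smul_apply, smul_eq_mul]
      have : S.bar (S.m y) = (S.bar (S.m y) - S.m y) + S.m y := by abel
      rw [this, map_add, Finsupp.add_apply, hdz y hy, zero_add,
        S.m.repr_self, Finsupp.single_eq_of_ne' hyx, mul_zero]
    · intro h
      exact absurd hxsupp h
  rw [hbar, ← hc] at hkey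
  -- so c x = Abar (c x); combined with Aneg (c x) this forces c x = 0
  have hcx0 : c x = 0 := by
    ext γ
    rw [AddMonoidAlgebra.coeff_zero, Finsupp.coe_zero, Pi.zero_apply]
    by_contra h
    have hγ : γ < 0 := hneg γ (Finsupp.mem_support_iff.mpr h)
    have : (c x).coeff γ = (c x).coeff (-γ) := by
      conv_lhs => rw [hkey]
      rw [Abar, AddMonoidAlgebra.coeff_domCongr]
      rfl
    have hnγ : (c x).coeff (-γ) = 0 := by
      by_contra h'
      exact lt_asymm hγ (neg_lt_zero.mp (hneg (-γ) (Finsupp.mem_support_iff.mpr h')))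
    exact h (this.trans hnγ)
  exact Finsupp.mem_support_iff.mp hxsupp hcx0

end CellsCacti
end
end
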